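/- Fix x ∈ ℝ^d and suppose the moment matrix M(x) is invertible, and that the first component of the basis vector is the constant 1, i.e. (H(y))_1 = 1 for all y ∈ ℝ^d. Then the RKPM shape functions form a partition of unity at x: Σ_{I=1}^{NP} Ψ_I(x) = 1. -/

import Mathlib

open Matrix

/-- If the moment matrix
`M(x) = Σ_I Φ_I(x) H(x - x_I) H(x - x_I)ᵀ` is invertible and the first component of
the basis vector is the constant `1`, then the RKPM shape functions
`Ψ_I(x) = Φ_I(x) (H(0)ᵀ M(x)⁻¹ H(x - x_I))` form a partition of unity at `x`. -/
theorem rkpm_partition_of_unity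
    {d q NP : ℕ} (hq : 0 < q)
    (H : (Fin d → ℝ) → (Fin q → ℝ))
    (xI : Fin NP → (Fin d → ℝ))
    (Φ : Fin NP → (Fin d → ℝ) → ℝ)
    (x : Fin d → ℝ)
    (M : Matrix (Fin q) (Fin q) ℝ)
    (hM : M = ∑ I : Fin NP,
        Φ I x • Matrix.vecMulVec (H (x - xI I)) (H (x - xI I)))
    (hInv : IsUnit M.det)
    (hH1 : ∀ y : Fin d → ℝ, H y ⟨0, hq⟩ = 1)
    (Ψ : Fin NP → ℝ)
    (hΨ : ∀ I : Fin NP, Ψ I = Φ I x * (H 0 ⬝ᵥ (M⁻¹ *ᵥ H (x - xI I)))) :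
    (∑ I : Fin NP, Ψ I) = 1 := by
  have key : M *ᵥ Pi.single (⟨0, hq⟩ : Fin q) (1:ℝ)
      = ∑ I : Fin NP, Φ I x • H (x - xI I) := by
    funext j
    simp [hM, mulVec, dotProduct_single, Matrix.sum_apply, vecMulVec_apply, hH1,
      Finset.sum_apply]
  have inv : M⁻¹ *ᵥ (M *ᵥ Pi.single (⟨0, hq⟩ : Fin q) (1:ℝ))
      = Pi.single (⟨0, hq⟩ : Fin q) (1:ℝ) := by
    rw [mulVec_mulVec, Matrix.nonsing_inv_mul M hInv, one_mulVec]
  have lin : ∀ s : Finset (Fin NP),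
      H 0 ⬝ᵥ (M⁻¹ *ᵥ ∑ I ∈ s, Φ I x • H (x - xI I))
        = ∑ I ∈ s, Φ I x * (H 0 ⬝ᵥ (M⁻¹ *ᵥ H (x - xI I))) := by
    intro s
    induction s using Finset.induction with
    | empty => simp
    | insert _ _ h ih =>
        simp [Finset.sum_insert h, Matrix.mulVec_add, Matrix.mulVec_smul,
          dotProduct_add, dotProduct_smul, ih, smul_eq_mul]
  calc ∑ I : Fin NP, Ψ I
      = H 0 ⬝ᵥ (M⁻¹ *ᵥ ∑ I : Fin NP, Φ I x • H (x - xI I)) := by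
        simp only [hΨ]; rw [lin]
    _ = H 0 ⬝ᵥ Pi.single (⟨0, hq⟩ : Fin q) (1:ℝ) := by rw [← key, inv]
    _ = 1 := by rw [dotProduct_single, hH1, one_mul]
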